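/- Let G : ℂ → H be continuous on the closed half-plane Re p ≥ 0 with ‖G(p)‖ ≤ C/(1 + |p|^γ) for some γ > 1/2, and suppose G(q/t - ik) → G(-ik) as t → ∞ for each fixed q on the line Re q = 1. Then lim_{t→∞} (1/(2πi)) ∫_{1-i∞}^{1+i∞} G(q/t - ik) e^q q^{-2} dq = G(-ik). -/

import Mathlib

open Filter Complex Real
open MeasureTheory Set
open scoped Topology FourierTransform

noncomputable section AuxContour

lemma aux_tendsto_mul_exp {b : ℝ} (hb : 0 < b) :
    Tendsto (fun t : ℝ => t * Real.exp (-b * t)) atTop (𝓝 0) := by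
  have h0 : Tendsto (fun x : ℝ => x * Real.exp (-x)) atTop (𝓝 0) := by
    simpa using Real.tendsto_pow_mul_exp_neg_atTop_nhds_zero 1
  have h2 : Tendsto (fun t : ℝ => (b * t) * Real.exp (-(b * t))) atTop (𝓝 0) :=
    h0.comp (tendsto_id.const_mul_atTop hb)
  have h3 := h2.const_mul b⁻¹
  rw [mul_zero] at h3
  refine h3.congr fun t => ?_
  field_simp

lemma aux_integrableOn (c : ℂ) (hc : 0 < c.re) :
    IntegrableOn (fun t : ℝ => (t : ℂ) * Complex.exp (-(c * t))) (Ioi (0:ℝ)) := by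
  have hbound : IntegrableOn (fun t : ℝ => t * Real.exp (-c.re * t)) (Ioi (0:ℝ)) := by
    have := integrableOn_rpow_mul_exp_neg_mul_rpow
      (by norm_num : (-1:ℝ) < 1) (by norm_num : (0:ℝ) < 1) hc
    simpa [Real.rpow_one] using this
  refine Integrable.mono' hbound ?_ ?_
  · refine Continuous.aestronglyMeasurable ?_ |>.restrict
    exact continuous_ofReal.mul ((continuous_const.mul continuous_ofReal).neg.cexp)
  · refine (ae_restrict_iff' measurableSet_Ioi).2 (ae_of_all _ fun t ht => ?_)
    have ht' : (0:ℝ) ≤ t := le_of_lt ht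
    rw [norm_mul, Complex.norm_real, Real.norm_eq_abs, _root_.abs_of_nonneg ht',
      Complex.norm_exp]
    have : (-(c * (t:ℂ))).re = -c.re * t := by
      simp [Complex.mul_re]
    rw [this]

lemma integral_mul_exp_neg (c : ℂ) (hc : 0 < c.re) :
    ∫ t in Ioi (0:ℝ), (t : ℂ) * Complex.exp (-(c * t)) = 1 / c ^ 2 := by
  have hc0 : c ≠ 0 := fun h => by simp [h] at hc
  set F : ℝ → ℂ := fun t => -((c * t + 1) / c ^ 2) * Complex.exp (-(c * t)) with hFdef
  have hderiv : ∀ t : ℝ, HasDerivAt F ((t : ℂ) * Complex.exp (-(c * t))) t := by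
    intro t
    have hA : HasDerivAt (fun z : ℂ => c * z + 1) c (t : ℂ) := by
      simpa using ((hasDerivAt_id (t:ℂ)).const_mul c).add_const 1
    have hB : HasDerivAt (fun z : ℂ => -((c * z + 1) / c ^ 2)) (-(c / c ^ 2)) (t : ℂ) :=
      (hA.div_const _).neg
    have hN : HasDerivAt (fun z : ℂ => -(c * z)) (-c) (t : ℂ) := by
      simpa using ((hasDerivAt_id (t:ℂ)).const_mul c).fun_neg
    have hE : HasDerivAt (fun z : ℂ => Complex.exp (-(c * z)))
        (Complex.exp (-(c * (t:ℂ))) * (-c)) (t : ℂ) := hN.cexp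
    have := (hB.mul hE).comp_ofReal
    convert this using 1
    · rfl
    have hc2 : (c:ℂ)^2 ≠ 0 := pow_ne_zero 2 hc0
    field_simp
    ring
  have hF0 : Tendsto F atTop (𝓝 0) := by
    have hexp : Tendsto (fun t : ℝ => Real.exp (-c.re * t)) atTop (𝓝 0) :=
      Real.tendsto_exp_atBot.comp (tendsto_id.const_mul_atTop_of_neg (by linarith))
    have hg : Tendsto (fun t : ℝ =>
        (‖c‖ / ‖c‖ ^ 2) * (t * Real.exp (-c.re * t)) + (1 / ‖c‖ ^ 2) * Real.exp (-c.re * t))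
        atTop (𝓝 0) := by
      have := ((aux_tendsto_mul_exp hc).const_mul (‖c‖ / ‖c‖ ^ 2)).add
        (hexp.const_mul (1 / ‖c‖ ^ 2))
      simpa using this
    refine squeeze_zero_norm' ?_ hg
    filter_upwards [eventually_ge_atTop (0:ℝ)] with t ht
    have hnexp : ‖Complex.exp (-(c * (t:ℂ)))‖ = Real.exp (-c.re * t) := by
      rw [Complex.norm_exp]
      congr 1
      simp [Complex.mul_re]
    have h1 : ‖F t‖ = ‖c * t + 1‖ / ‖c‖ ^ 2 * Real.exp (-c.re * t) := by
      rw [hFdef]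
      simp only [norm_mul, norm_neg, norm_div, hnexp]
      rw [norm_pow]
    rw [h1]
    have h2 : ‖c * (t:ℂ) + 1‖ ≤ ‖c‖ * t + 1 := by
      refine (norm_add_le _ _).trans ?_
      simp [Complex.norm_real, _root_.abs_of_nonneg ht]
    have h3 : (0:ℝ) ≤ Real.exp (-c.re * t) := (Real.exp_pos _).le
    calc ‖c * t + 1‖ / ‖c‖ ^ 2 * Real.exp (-c.re * t)
        ≤ (‖c‖ * t + 1) / ‖c‖ ^ 2 * Real.exp (-c.re * t) := by
          apply mul_le_mul_of_nonneg_right _ h3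
          apply div_le_div_of_nonneg_right h2 _ |>.trans_eq rfl
          · positivity
      _ = (‖c‖ / ‖c‖ ^ 2) * (t * Real.exp (-c.re * t)) + (1 / ‖c‖ ^ 2) * Real.exp (-c.re * t) := by
          ring
  have hcont : ContinuousWithinAt F (Ici (0:ℝ)) 0 :=
    (hderiv 0).continuousAt.continuousWithinAt
  have := integral_Ioi_of_hasDerivAt_of_tendsto hcont (fun x _ => hderiv x)
    (aux_integrableOn c hc) hF0
  rw [this, hFdef]
  simp


noncomputable def gfun : ℝ → ℂ := fun t => ((max t 0 : ℝ) : ℂ) * Complex.exp (-(t : ℂ))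

lemma gfun_cont : Continuous gfun :=
  (continuous_ofReal.comp (continuous_id.max continuous_const)).mul
    continuous_ofReal.neg.cexp

lemma gfun_eq_indicator :
    gfun = Set.indicator (Ici (0:ℝ)) (fun t : ℝ => (t : ℂ) * Complex.exp (-(t : ℂ))) := by
  ext t
  by_cases h : (0:ℝ) ≤ t
  · simp [gfun, Set.indicator_of_mem (mem_Ici.2 h), max_eq_left h]
  · push_neg at h
    simp [gfun, Set.indicator_of_notMem (fun hc => h.not_ge (mem_Ici.1 hc)),
      max_eq_right h.le]

lemma gfun_integrable : Integrable gfun := by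
  rw [gfun_eq_indicator, integrable_indicator_iff measurableSet_Ici]
  have h := aux_integrableOn 1 (by simp)
  simp only [one_mul] at h
  exact (integrableOn_Ici_iff_integrableOn_Ioi (by simp)).2 h

lemma gfun_fourier (ξ : ℝ) :
    𝓕 gfun ξ = 1 / (1 + ((2 * π * ξ : ℝ) : ℂ) * I) ^ 2 := by
  rw [Real.fourier_real_eq_integral_exp_smul]
  set c : ℂ := 1 + ((2 * π * ξ : ℝ) : ℂ) * I with hc
  have hcre : 0 < c.re := by simp [hc]
  have h1 : (∫ v : ℝ, Complex.exp (↑(-2 * π * v * ξ) * I) • gfun v)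
      = ∫ v in Ici (0:ℝ), Complex.exp (↑(-2 * π * v * ξ) * I) • gfun v := by
    refine (setIntegral_eq_integral_of_forall_compl_eq_zero fun v hv => ?_).symm
    have : v < 0 := not_le.1 fun h => hv (mem_Ici.2 h)
    simp [gfun, max_eq_right this.le]
  rw [h1, integral_Ici_eq_integral_Ioi]
  rw [show (∫ v in Ioi (0:ℝ), Complex.exp (↑(-2 * π * v * ξ) * I) • gfun v)
      = ∫ v in Ioi (0:ℝ), (v:ℂ) * Complex.exp (-(c * v)) from
    setIntegral_congr_fun measurableSet_Ioi fun v hv => ?_]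
  · exact integral_mul_exp_neg c hcre
  · have hv0 : (0:ℝ) ≤ v := (mem_Ioi.1 hv).le
    simp only [gfun, max_eq_left hv0, smul_eq_mul]
    rw [← mul_assoc, mul_comm (Complex.exp _), mul_assoc, ← Complex.exp_add]
    congr 1
    rw [hc]
    push_cast
    ring

lemma gfun_fourier_integrable : Integrable (𝓕 gfun) := by
  have hformula : 𝓕 gfun = fun ξ : ℝ => 1 / (1 + ((2 * π * ξ : ℝ) : ℂ) * I) ^ 2 :=
    funext gfun_fourier
  rw [hformula]
  have hne : ∀ ξ : ℝ, (1 + ((2 * π * ξ : ℝ) : ℂ) * I) ≠ 0 := by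
    intro ξ h
    have := congrArg Complex.re h
    simp at this
  refine Integrable.mono' (g := fun ξ : ℝ => (1 + (2 * π * ξ) ^ 2)⁻¹) ?_ ?_ ?_
  · have h := integrable_inv_one_add_sq.comp_mul_left' (R := 2 * π)
      (by positivity : (2*π:ℝ) ≠ 0)
    simpa using h
  · refine Continuous.aestronglyMeasurable ?_
    refine continuous_const.div ?_ fun ξ => pow_ne_zero _ (hne ξ)
    fun_prop
  · refine ae_of_all _ fun ξ => ?_
    rw [norm_div, norm_one, norm_pow]
    have : ‖1 + ((2 * π * ξ : ℝ) : ℂ) * I‖ ^ 2 = 1 + (2 * π * ξ) ^ 2 := by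
      rw [Complex.sq_norm, Complex.normSq_apply]
      simp
      ring
    rw [this, one_div]

lemma key_integral : ∫ s : ℝ, Complex.exp (1 + I * s) / (1 + I * s) ^ 2 = 2 * (π : ℂ) := by
  set φ : ℝ → ℂ := fun s => Complex.exp (↑s * I) / (1 + ↑s * I) ^ 2 with hφ
  have hinv : 𝓕⁻ (𝓕 gfun) 1 = gfun 1 :=
    gfun_integrable.fourierInv_fourier_eq gfun_fourier_integrable gfun_cont.continuousAt
  have hval : gfun 1 = Complex.exp (-1) := by simp [gfun]
  have hlhs : 𝓕⁻ (𝓕 gfun) 1 = ∫ ξ : ℝ, φ (2 * π * ξ) := by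
    rw [Real.fourierInv_eq_fourier_neg,
      Real.fourier_real_eq_integral_exp_smul]
    refine integral_congr_ae (ae_of_all _ fun ξ => ?_)
    simp only [gfun_fourier, smul_eq_mul, hφ]
    norm_num
    rw [div_eq_mul_inv]
  have h2 : (∫ ξ : ℝ, φ (2 * π * ξ)) = |(2 * π)⁻¹| • ∫ s : ℝ, φ s :=
    MeasureTheory.Measure.integral_comp_mul_left φ (2 * π)
  have hπ : (0:ℝ) < 2 * π := by positivity
  have hφint : (∫ s : ℝ, φ s) = (2 * π : ℝ) • Complex.exp (-1) := by
    have := hinv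
    rw [hlhs, hval, h2] at this
    rw [abs_of_pos (inv_pos.2 hπ)] at this
    rw [← this, smul_smul, mul_inv_cancel₀ hπ.ne', one_smul]
  have hcongr : ∀ s : ℝ, Complex.exp (1 + I * s) / (1 + I * s) ^ 2 = Complex.exp 1 * φ s := by
    intro s
    rw [hφ, Complex.exp_add]
    have : (I : ℂ) * s = ↑s * I := mul_comm _ _
    rw [this]
    ring
  calc (∫ s : ℝ, Complex.exp (1 + I * s) / (1 + I * s) ^ 2)
      = ∫ s : ℝ, Complex.exp 1 * φ s := by simp_rw [hcongr]
    _ = Complex.exp 1 * ∫ s : ℝ, φ s := integral_const_mul _ _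
    _ = 2 * (π : ℂ) := by
        rw [hφint, real_smul,
          show Complex.exp 1 * (((2 * π : ℝ) : ℂ) * Complex.exp (-1))
            = ((2 * π : ℝ) : ℂ) * (Complex.exp 1 * Complex.exp (-1)) by ring,
          ← Complex.exp_add]
        norm_num


end AuxContour

/-- Dominated convergence on the contour `Re q = 1`: under a decay bound on `G` and
pointwise convergence `G(q/t - ik) → G(-ik)`, the contour integral
`(1/(2πi)) ∫ G(q/t - ik) e^q q⁻² dq` tends to `G(-ik)`. -/
theorem contour_integral_tendsto_boundary_value
    {H : Type*} [NormedAddCommGroup H] [NormedSpace ℂ H] [CompleteSpace H]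
    (G : ℂ → H) (k : ℝ) (γ C : ℝ) (hγ : 1 / 2 < γ) (hC : 0 < C)
    (hcont : ContinuousOn G {p : ℂ | 0 ≤ p.re})
    (hbound : ∀ p : ℂ, 0 ≤ p.re → ‖G p‖ ≤ C / (1 + ‖p‖ ^ γ))
    (hptwise : ∀ s : ℝ, Tendsto (fun t : ℝ => G ((1 + I * s) / t - I * k))
        atTop (nhds (G (-(I * k))))) :
    Tendsto (fun t : ℝ =>
        (1 / (2 * (π : ℂ))) • ∫ s : ℝ,
          (Complex.exp (1 + I * s) / (1 + I * s) ^ 2) • G ((1 + I * s) / t - I * k))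
      atTop (nhds (G (-(I * k)))) := by
  have hone : ∀ s : ℝ, (1 + I * (s:ℂ)) ≠ 0 := by
    intro s h
    have := congrArg Complex.re h
    simp at this
  have hnorm_c : ∀ s : ℝ, ‖Complex.exp (1 + I * s) / (1 + I * s) ^ 2‖
      = Real.exp 1 / (1 + s ^ 2) := by
    intro s
    rw [norm_div, norm_pow, Complex.norm_exp]
    congr 1
    · congr 1
      simp
    · rw [Complex.sq_norm, Complex.normSq_apply]
      simp
      ring
  have hGbound : ∀ p : ℂ, 0 ≤ p.re → ‖G p‖ ≤ C := by
    intro p hp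
    refine (hbound p hp).trans ?_
    have h1 : (0:ℝ) ≤ ‖p‖ ^ γ := Real.rpow_nonneg (norm_nonneg p) γ
    rw [div_le_iff₀ (by linarith)]
    nlinarith
  have hre : ∀ t : ℝ, 1 ≤ t → ∀ s : ℝ, 0 ≤ ((1 + I * (s:ℂ)) / (t:ℂ) - I * (k:ℂ)).re := by
    intro t ht s
    have ht0 : (0:ℝ) < t := lt_of_lt_of_le one_pos ht
    have : ((1 + I * (s:ℂ)) / (t:ℂ) - I * (k:ℂ)).re = 1 / t := by
      rw [Complex.sub_re, Complex.div_ofReal_re]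
      simp
    rw [this]
    positivity
  -- dominated convergence
  have keylim : Tendsto (fun t : ℝ => ∫ s : ℝ,
      (Complex.exp (1 + I * s) / (1 + I * s) ^ 2) • G ((1 + I * s) / t - I * k))
      atTop (𝓝 (∫ s : ℝ, (Complex.exp (1 + I * s) / (1 + I * s) ^ 2) • G (-(I * k)))) := by
    refine MeasureTheory.tendsto_integral_filter_of_dominated_convergence
      (fun s : ℝ => (Real.exp 1 * C) * (1 + s ^ 2)⁻¹) ?_ ?_ ?_ ?_
    · filter_upwards [eventually_ge_atTop (1:ℝ)] with t ht
      have hmap : Continuous fun s : ℝ => (1 + I * (s:ℂ)) / (t:ℂ) - I * (k:ℂ) := by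
        fun_prop
      have hG : Continuous fun s : ℝ => G ((1 + I * s) / t - I * k) :=
        hcont.comp_continuous hmap fun s => hre t ht s
      refine Continuous.aestronglyMeasurable ?_
      refine Continuous.smul ?_ hG
      refine Continuous.div ?_ ?_ fun s => pow_ne_zero _ (hone s)
      · fun_prop
      · fun_prop
    · filter_upwards [eventually_ge_atTop (1:ℝ)] with t ht
      refine ae_of_all _ fun s => ?_
      rw [norm_smul, hnorm_c]
      have h2 : ‖G ((1 + I * s) / t - I * k)‖ ≤ C := hGbound _ (hre t ht s)
      have h3 : (0:ℝ) < 1 + s ^ 2 := by positivity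
      calc Real.exp 1 / (1 + s ^ 2) * ‖G ((1 + I * s) / t - I * k)‖
          ≤ Real.exp 1 / (1 + s ^ 2) * C := by
            exact mul_le_mul_of_nonneg_left h2 (by positivity)
        _ = Real.exp 1 * C * (1 + s ^ 2)⁻¹ := by ring
    · exact (integrable_inv_one_add_sq.const_mul _)
    · exact ae_of_all _ fun s => (hptwise s).const_smul _
  have hlimit_integral : (∫ s : ℝ, (Complex.exp (1 + I * s) / (1 + I * s) ^ 2) • G (-(I * k)))
      = (2 * (π : ℂ)) • G (-(I * k)) := by
    rw [integral_smul_const, key_integral]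
  rw [hlimit_integral] at keylim
  have hfinal := keylim.const_smul (1 / (2 * (π : ℂ)))
  have hπ : (2 * (π : ℂ)) ≠ 0 := by
    simp [Complex.ofReal_ne_zero, Real.pi_ne_zero]
  rwa [smul_smul, one_div_mul_cancel hπ, one_smul] at hfinal
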